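/- arXiv:1101.4200 — 2 statements merged into one kernel-verified Lean document; each statement's English description precedes it below -/
import Mathlib

section
/- Let G be holomorphic on a neighborhood of the closed disc of radius 4r > 0 centered at 0 in ℂ. If λ₁,…,λ_k are pairwise distinct with |λᵢ| ≤ 3r for all i, then |G[λ₁,…,λ_k]| ≤ 4^k · r^{1−k} · sup_{|λ|=4r} |G(λ)|. -/
/-- Divided differences: G[λ]=G(λ),
G[λ₁,…,λ_{k+1}]=(G[λ₁,…,λ_k]−G[λ₂,…,λ_{k+1}])/(λ₁−λ_{k+1}). -/
noncomputable def divDiff (G : ℂ → ℂ) : List ℂ → ℂ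
  | [] => 0
  | [a] => G a
  | a :: b :: l =>
      (divDiff G (a :: (b :: l).dropLast) - divDiff G (b :: l)) /
        (a - (b :: l).getLast (List.cons_ne_nil _ _))
termination_by l => l.length
decreasing_by
  · simp [List.length_dropLast]
  · simp

set_option linter.unusedVariables false

open Metric in
lemma prodL_cont (l : List ℂ) : Continuous fun z => (l.map (fun w => z - w)).prod := by
  induction l with
  | nil => simpa using continuous_const
  | cons a t ih => simp only [List.map_cons, List.prod_cons]; exact ((continuous_id.sub continuous_const).mul ih)

lemma prodL_ne (l : List ℂ) {z : ℂ} (h : ∀ x ∈ l, z ≠ x) :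
    (l.map (fun w => z - w)).prod ≠ 0 := by
  induction l with
  | nil => simp
  | cons a t ih =>
    simp only [List.map_cons, List.prod_cons]
    exact mul_ne_zero (sub_ne_zero.2 (h a (by simp))) (ih fun x hx => h x (by simp [hx]))

open Metric in
lemma reprDD (R : ℝ) (hR : 0 < R) (G : ℂ → ℂ) (hG : DifferentiableOn ℂ G (closedBall (0:ℂ) R)) :
    ∀ n (l : List ℂ), l.length = n → l ≠ [] → l.Nodup → (∀ x ∈ l, x ∈ ball (0:ℂ) R) →
    (∮ z in C(0, R), G z / ((l.map (fun w => z - w)).prod)) =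
      (2 * Real.pi * Complex.I) * divDiff G l := by
  intro n
  induction n using Nat.strong_induction_on with
  | _ n ih =>
  intro l hlen hne hnd hmem
  match l with
  | [a] =>
    have ha : a ∈ ball (0:ℂ) R := hmem a (by simp)
    have := hG.circleIntegral_sub_inv_smul ha
    simp only [smul_eq_mul] at this
    rw [show (fun z => G z / (([a].map (fun w => z - w)).prod)) = fun z => (z - a)⁻¹ * G z by
      funext z; simp [div_eq_inv_mul]]
    rw [this, divDiff]
  | a :: b :: t =>
    set lst := (b :: t).getLast (List.cons_ne_nil _ _) with hlst
    have hlast_mem : lst ∈ b :: t := List.getLast_mem _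
    have hane : a ≠ lst := fun h => (List.nodup_cons.1 hnd).1 (h ▸ hlast_mem)
    have hsub : a - lst ≠ 0 := sub_ne_zero.2 hane
    set l1 : List ℂ := a :: (b :: t).dropLast with hl1
    set l2 : List ℂ := b :: t with hl2
    have hl1drop : l1 = (a :: b :: t).dropLast := by simp [hl1, hl2]
    have hs1 : l1.Sublist (a :: b :: t) := hl1drop ▸ List.dropLast_sublist _
    have hs2 : l2.Sublist (a :: b :: t) := List.sublist_cons_self _ _
    have key : ∀ z ∈ sphere (0:ℂ) R,
        G z / ((l1.map (fun w => z - w)).prod) - G z / ((l2.map (fun w => z - w)).prod) =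
        (a - lst) • (G z / (((a :: b :: t).map (fun w => z - w)).prod)) := by
      intro z hz
      have hzne : ∀ x ∈ (a :: b :: t), z ≠ x := by
        intro x hx h
        have := hmem x hx
        rw [← h] at this
        exact absurd (mem_sphere_zero_iff_norm.1 hz ▸ mem_ball_zero_iff.1 this) (lt_irrefl _)
      have h2 : (l2.map (fun w => z - w)).prod ≠ 0 :=
        prodL_ne _ fun x hx => hzne x (hs2.mem hx)
      have hza : z - a ≠ 0 := sub_ne_zero.2 (hzne a (by simp))
      have hzl : z - lst ≠ 0 := sub_ne_zero.2 (hzne lst (List.mem_cons_of_mem _ hlast_mem))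
      have split : ((a :: b :: t).map (fun w => z - w)).prod
          = ((l1.map (fun w => z - w)).prod) * (z - lst) := by
        conv_lhs => rw [show (a :: b :: t) = l1 ++ [lst] by
          rw [hl1drop]; exact (List.dropLast_append_getLast (by simp)).symm]
        simp
      have split2 : ((a :: b :: t).map (fun w => z - w)).prod
          = (z - a) * ((l2.map (fun w => z - w)).prod) := by simp [hl2]
      have h1 : (l1.map (fun w => z - w)).prod ≠ 0 :=
        prodL_ne _ fun x hx => hzne x (hs1.mem hx)
      rw [smul_eq_mul, split2]
      rw [show (l2.map (fun w => z - w)).prod =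
        ((l1.map (fun w => z - w)).prod) * (z - lst) / (z - a) by
          field_simp; rw [← split, split2]; ring]
      field_simp
      ring
    have hGc : ContinuousOn G (sphere (0:ℂ) R) :=
      hG.continuousOn.mono sphere_subset_closedBall
    have hlen' : n = t.length + 2 := by simpa [hl2] using hlen.symm
    have integ : ∀ (m : List ℂ), m.Sublist (a :: b :: t) →
        CircleIntegrable (fun z => G z / ((m.map (fun w => z - w)).prod)) 0 R := by
      intro m hm
      apply ContinuousOn.circleIntegrable hR.le
      apply hGc.div ((prodL_cont m).continuousOn)
      intro z hz
      apply prodL_ne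
      intro x hx h
      have := hmem x (hm.mem hx)
      rw [← h] at this
      exact absurd (mem_sphere_zero_iff_norm.1 hz ▸ mem_ball_zero_iff.1 this) (lt_irrefl _)
    have i1 := integ l1 hs1
    have i2 := integ l2 hs2
    have e1 := ih (n-1) (by omega) l1 (by simp [hl1, hl2]; omega) (by simp [hl1])
        (hnd.sublist hs1) (fun x hx => hmem x (hs1.mem hx))
    have e2 := ih (n-1) (by omega) l2 (by simp [hl2]; omega) (by simp [hl2])
        (hnd.sublist hs2) (fun x hx => hmem x (hs2.mem hx))
    have hsum : (∮ z in C(0, R), G z / ((l1.map (fun w => z - w)).prod)) -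
        (∮ z in C(0, R), G z / ((l2.map (fun w => z - w)).prod)) =
        (a - lst) * (∮ z in C(0, R), G z / (((a :: b :: t).map (fun w => z - w)).prod)) := by
      rw [← circleIntegral.integral_sub i1 i2, circleIntegral.integral_congr hR.le key,
        ← smul_eq_mul, circleIntegral.integral_smul]
    rw [e1, e2] at hsum
    have hdd : divDiff G (a :: b :: t) = (divDiff G l1 - divDiff G l2) / (a - lst) := by
      rw [divDiff]
    show (∮ z in C(0, R), G z / (((a :: b :: t).map (fun w => z - w)).prod)) = _
    rw [hdd, ← mul_div_assoc, eq_div_iff hsub]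
    linear_combination -hsum

lemma pow_le_prodR (r : ℝ) (hr : 0 ≤ r) : ∀ (L : List ℝ), (∀ x ∈ L, r ≤ x) →
    r ^ L.length ≤ L.prod := by
  intro L
  induction L with
  | nil => simp
  | cons x t ih =>
    intro h
    simp only [List.length_cons, List.prod_cons, pow_succ]
    rw [mul_comm]
    exact mul_le_mul (h x (by simp)) (ih fun y hy => h y (by simp [hy]))
      (pow_nonneg hr _) (le_trans hr (h x (by simp)))

open Metric in
/-- Bound on divided differences at points of modulus ≤ 3r by the sup of |G| on the
circle of radius 4r. -/
theorem stmt2 (r : ℝ) (hr : 0 < r) (U : Set ℂ) (hU : IsOpen U)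
    (hUb : Metric.closedBall (0 : ℂ) (4 * r) ⊆ U) (G : ℂ → ℂ)
    (hG : DifferentiableOn ℂ G U) (k : ℕ) (hk : 0 < k) (lam : Fin k → ℂ)
    (hinj : Function.Injective lam) (hle : ∀ i, ‖lam i‖ ≤ 3 * r) :
    ‖divDiff G (List.ofFn lam)‖ ≤
      4 ^ k * r ^ ((1 : ℝ) - k) *
        sSup ((fun z => ‖G z‖) '' Metric.sphere (0 : ℂ) (4 * r)) := by
  have hR : (0:ℝ) < 4 * r := by linarith
  have hG4 : DifferentiableOn ℂ G (closedBall (0:ℂ) (4 * r)) := hG.mono hUb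
  set l := List.ofFn lam with hl
  have hlk : l.length = k := by simp [hl]
  have hne : l ≠ [] := List.ne_nil_of_length_pos (by omega)
  have hnd : l.Nodup := List.nodup_ofFn.mpr hinj
  have hmem' : ∀ x ∈ l, ‖x‖ ≤ 3 * r := by
    intro x hx
    obtain ⟨i, hi⟩ := List.mem_ofFn.1 (hl ▸ hx)
    exact hi ▸ hle i
  have hmem : ∀ x ∈ l, x ∈ ball (0:ℂ) (4 * r) := by
    intro x hx
    rw [mem_ball_zero_iff]
    calc ‖x‖ = ‖x‖ := rfl
    _ ≤ 3 * r := hmem' x hx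
    _ < 4 * r := by linarith
  have hrepr := reprDD (4 * r) hR G hG4 l.length l rfl hne hnd hmem
  set M := sSup ((fun z => ‖G z‖) '' sphere (0:ℂ) (4 * r)) with hM
  have hGc : ContinuousOn G (sphere (0:ℂ) (4 * r)) :=
    hG4.continuousOn.mono sphere_subset_closedBall
  have hMbdd : BddAbove ((fun z => ‖G z‖) '' sphere (0:ℂ) (4 * r)) :=
    ((isCompact_sphere _ _).bddAbove_image
      (continuous_norm.comp_continuousOn hGc))
  have hMle : ∀ z ∈ sphere (0:ℂ) (4 * r), ‖G z‖ ≤ M :=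
    fun z hz => le_csSup hMbdd ⟨z, hz, rfl⟩
  obtain ⟨z₀, hz₀⟩ : (sphere (0:ℂ) (4 * r)).Nonempty :=
    NormedSpace.sphere_nonempty.2 hR.le
  have hM0 : 0 ≤ M := le_trans (norm_nonneg _) (hMle z₀ hz₀)
  have hrk : (0:ℝ) < r ^ k := pow_pos hr k
  -- bound on the integrand
  have hbound : ∀ z ∈ sphere (0:ℂ) (4 * r),
      ‖G z / ((l.map (fun w => z - w)).prod)‖ ≤ M / r ^ k := by
    intro z hz
    have hzn : ‖z‖ = 4 * r := by
      simpa using mem_sphere_zero_iff_norm.1 hz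
    have hprod : r ^ k ≤ ‖(l.map (fun w => z - w)).prod‖ := by
      rw [List.norm_prod, List.map_map]
      have := pow_le_prodR r hr.le (l.map fun w => ‖z - w‖) ?_
      · simpa [List.length_map, hlk, Function.comp_def] using this
      · intro x hx
        obtain ⟨w, hw, hwx⟩ := List.mem_map.1 hx
        have h1 : ‖w‖ ≤ 3 * r := hmem' w hw
        have h2 : ‖z‖ - ‖w‖ ≤ ‖z - w‖ := by
          simpa using norm_sub_norm_le z w
        rw [← hwx]
        rw [hzn] at h2
        linarith
    have hprod0 : ‖(l.map (fun w => z - w)).prod‖ ≠ 0 := (lt_of_lt_of_le hrk hprod).ne'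
    rw [show ‖G z / ((l.map (fun w => z - w)).prod)‖
      = ‖G z‖ / ‖(l.map (fun w => z - w)).prod‖ by
        simp]
    exact div_le_div₀ hM0 (hMle z hz) hrk hprod
  have hnorm := circleIntegral.norm_integral_le_of_norm_le_const hR.le hbound
  rw [hrepr] at hnorm
  have h2pi : (0:ℝ) < 2 * Real.pi := by positivity
  have habs : ‖(2 * ↑Real.pi * Complex.I) * divDiff G l‖
      = (2 * Real.pi) * ‖divDiff G l‖ := by
    simp [norm_mul, abs_of_pos Real.pi_pos]
  rw [habs] at hnorm
  have hdd : ‖divDiff G l‖ ≤ 4 * r * (M / r ^ k) := by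
    have := hnorm
    nlinarith [Real.pi_pos, norm_nonneg (divDiff G l)]
  refine le_trans hdd ?_
  have hrw : r ^ ((1:ℝ) - k) = r / r ^ k := by
    rw [Real.rpow_sub hr, Real.rpow_one, Real.rpow_natCast]
  rw [hrw]
  have h4 : (4:ℝ) ≤ 4 ^ k := by
    calc (4:ℝ) = 4 ^ 1 := (pow_one 4).symm
    _ ≤ 4 ^ k := pow_le_pow_right₀ (by norm_num) hk
  calc 4 * r * (M / r ^ k) = 4 * (r / r ^ k * M) := by ring
  _ ≤ 4 ^ k * (r / r ^ k * M) := by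
      apply mul_le_mul_of_nonneg_right h4
      positivity
  _ = 4 ^ k * (r / r ^ k) * M := by ring
end

section
/- Let G be holomorphic and bounded on the open disc of radius 4r > 0 in ℂ, and let q ∈ [1,∞). If λ₁,…,λ_k are pairwise distinct with |λᵢ| ≤ 3r, then there is a constant C depending only on k and q (not on r, G, or the λᵢ) such that |G[λ₁,…,λ_k]|^q ≤ C · r^{(1−k)q − 2} · ∫_{|λ| ≤ 4r} |G(λ)|^q dA(λ), where dA is the planar Lebesgue measure. -/
open MeasureTheory Metric Set intervalIntegral Real



lemma contP (L : List ℂ) : Continuous fun z : ℂ => ((L.map (fun w => z - w)).prod) := by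
  induction L with
  | nil => simpa using continuous_const
  | cons a l ih =>
    simp only [List.map_cons, List.prod_cons]
    exact (continuous_id.sub continuous_const).mul ih

lemma Pne {L : List ℂ} {s : ℝ} {z : ℂ} (hz : z ∈ sphere (0:ℂ) s)
    (hmem : ∀ x ∈ L, x ∈ ball (0:ℂ) s) :
    ((L.map (fun w => z - w)).prod) ≠ 0 := by
  apply List.prod_ne_zero
  intro h0
  rcases List.mem_map.mp h0 with ⟨w, hw, hw0⟩
  have hzw : z = w := sub_eq_zero.mp hw0
  rw [mem_sphere_zero_iff_norm] at hz
  have h2 := mem_ball_zero_iff.mp (hmem w hw)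
  rw [← hzw] at h2
  linarith [hz ▸ h2]

lemma divDiff_circleIntegral (G : ℂ → ℂ) (s : ℝ) (hs : 0 < s)
    (hG : DiffContOnCl ℂ G (ball (0:ℂ) s)) :
    ∀ (n : ℕ) (L : List ℂ), L.length = n → L ≠ [] → (∀ x ∈ L, x ∈ ball (0:ℂ) s) →
    L.Pairwise (· ≠ ·) →
    divDiff G L = (2 * Real.pi * Complex.I : ℂ)⁻¹ •
      ∮ z in C(0, s), ((L.map (fun w => z - w)).prod)⁻¹ • G z := by
  have hGc : ContinuousOn G (closedBall (0:ℂ) s) := by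
    have := hG.continuousOn; rwa [closure_ball 0 hs.ne'] at this
  have key : ∀ L : List ℂ, (∀ x ∈ L, x ∈ ball (0:ℂ) s) →
      CircleIntegrable (fun z => ((L.map (fun w => z - w)).prod)⁻¹ • G z) 0 s := by
    intro L hmem
    apply ContinuousOn.circleIntegrable hs.le
    exact (((contP L).continuousOn).inv₀ (fun z hz => Pne hz hmem)).smul
      (hGc.mono sphere_subset_closedBall)
  intro n
  induction n using Nat.strong_induction_on with
  | _ n IH =>
    intro L hlen hne hmem hdist
    match L with
    | [a] =>
      have ha : a ∈ ball (0:ℂ) s := hmem a (by simp)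
      have := hG.circleIntegral_sub_inv_smul ha
      simp only [divDiff, List.map_cons, List.map_nil, List.prod_cons, List.prod_nil, mul_one]
      rw [this, inv_smul_smul₀ Complex.two_pi_I_ne_zero]
    | a :: b :: l =>
      set T := b :: l with hT
      set last := T.getLast (List.cons_ne_nil _ _) with hlast
      set D := a :: T.dropLast with hD
      have hDL : D = (a :: T).dropLast := by simp [hD, hT]
      have hlastL : last = (a :: T).getLast (List.cons_ne_nil _ _) := by
        rw [hlast]; exact (List.getLast_cons _).symm
      have hTsub : T.Sublist (a :: T) := List.sublist_cons_self a T
      have hDsub : D.Sublist (a :: T) := hDL ▸ List.dropLast_sublist _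
      have hTmem : ∀ x ∈ T, x ∈ ball (0:ℂ) s := fun x hx => hmem x (hTsub.subset hx)
      have hDmem : ∀ x ∈ D, x ∈ ball (0:ℂ) s := fun x hx => hmem x (hDsub.subset hx)
      have hTdist : T.Pairwise (· ≠ ·) := hdist.sublist hTsub
      have hDdist : D.Pairwise (· ≠ ·) := hdist.sublist hDsub
      have halast : a ≠ last := by
        have := (List.pairwise_cons.mp hdist).1
        exact this last (hlast ▸ T.getLast_mem (List.cons_ne_nil _ _))
      have hTlen : T.length < n := by simp [← hlen, hT]
      have hDlen : D.length < n := by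
        simp only [hD, List.length_cons, ← hlen]
        simp [hT, List.length_dropLast]
      have IHT := IH T.length hTlen T rfl (List.cons_ne_nil _ _) hTmem hTdist
      have IHD := IH D.length hDlen D rfl (List.cons_ne_nil _ _) hDmem hDdist
      have hgetD : divDiff G (a :: b :: l) = (divDiff G D - divDiff G T) / (a - last) := by
        rw [divDiff]
      rw [hgetD, IHD, IHT, ← smul_sub]
      rw [← circleIntegral.integral_sub (key D hDmem) (key T hTmem)]
      have hEq : EqOn
          (fun z => ((D.map (fun w => z - w)).prod)⁻¹ • G z
            - ((T.map (fun w => z - w)).prod)⁻¹ • G z)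
          (fun z => (a - last) • (((a :: T).map (fun w => z - w)).prod)⁻¹ • G z)
          (sphere (0:ℂ) s) := by
        intro z hz
        have hPL : (((a :: T).map (fun w => z - w)).prod) ≠ 0 := Pne hz hmem
        have h1 : (((a :: T).map (fun w => z - w)).prod)
            = ((D.map (fun w => z - w)).prod) * (z - last) := by
          conv_lhs => rw [show (a :: T) = D ++ [last] from by
            rw [hDL, hlastL]; exact (List.dropLast_append_getLast _).symm]
          simp
        have h2 : (((a :: T).map (fun w => z - w)).prod)
            = (z - a) * ((T.map (fun w => z - w)).prod) := by simp
        have hPD : ((D.map (fun w => z - w)).prod) ≠ 0 := Pne hz hDmem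
        have hPT : ((T.map (fun w => z - w)).prod) ≠ 0 := Pne hz hTmem
        have hzl : z - last ≠ 0 := by
          intro h; apply hPL; rw [h1, h, mul_zero]
        have hza : z - a ≠ 0 := by
          intro h; apply hPL; rw [h2, h, zero_mul]
        have e1 : ((D.map (fun w => z - w)).prod)⁻¹
            = (z - last) * (((a :: T).map (fun w => z - w)).prod)⁻¹ := by
          rw [h1, mul_inv]; field_simp
        have e2 : ((T.map (fun w => z - w)).prod)⁻¹
            = (z - a) * (((a :: T).map (fun w => z - w)).prod)⁻¹ := by
          rw [h2, mul_inv]; field_simp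
        simp only [smul_eq_mul, ← sub_mul]
        rw [e1, e2]; ring
      rw [circleIntegral.integral_congr hs.le hEq, circleIntegral.integral_smul]
      rw [smul_comm]
      rw [div_eq_iff (sub_ne_zero.mpr halast)]
      rw [smul_eq_mul, smul_eq_mul, mul_comm]
lemma listProdLB {c : ℝ} (hc : 0 ≤ c) (z : ℂ) :
    ∀ L : List ℂ, (∀ x ∈ L, c ≤ ‖z - x‖) →
      c ^ L.length ≤ ‖(L.map (fun w => z - w)).prod‖
  | [] => by simp
  | a :: l => fun hx => by
      simp only [List.map_cons, List.prod_cons, map_mul, norm_mul, List.length_cons, pow_succ']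
      exact mul_le_mul (hx a (by simp))
        (listProdLB hc z l fun x h => hx x (List.mem_cons_of_mem _ h))
        (pow_nonneg hc _) (norm_nonneg _)

lemma perS (k : ℕ) (hk : 0 < k) (q : ℝ) (hq : 1 ≤ q) (r : ℝ) (hr : 0 < r) (G : ℂ → ℂ)
    (hGd : DifferentiableOn ℂ G (ball (0:ℂ) (4*r)))
    (L : List ℂ) (hLlen : L.length = k)
    (hdist : L.Pairwise (· ≠ ·)) (hmem3 : ∀ x ∈ L, ‖x‖ ≤ 3*r)
    (s : ℝ) (hs1 : 7*r/2 ≤ s) (hs2 : s < 4*r) :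
    ‖divDiff G L‖ ^ q ≤
      (2*π)⁻¹ * ((4*r*((r/2)^k)⁻¹) ^ q * (2/(7*r))) *
        ∫ θ in Ioo (-π) π, s * ‖G (circleMap 0 s θ)‖ ^ q := by
  have hπ := Real.pi_pos
  have hs0 : 0 < s := by linarith
  have hs3 : 3*r < s := by linarith
  have hGc4 : ContinuousOn G (ball (0:ℂ) (4*r)) := hGd.continuousOn
  have hDC : DiffContOnCl ℂ G (ball (0:ℂ) s) := by
    refine ⟨hGd.mono (ball_subset_ball hs2.le), ?_⟩
    rw [closure_ball 0 hs0.ne']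
    exact hGc4.mono (closedBall_subset_ball hs2)
  have hmemball : ∀ x ∈ L, x ∈ ball (0:ℂ) s := fun x hx =>
    mem_ball_zero_iff.mpr (by linarith [hmem3 x hx])
  have hne : L ≠ [] := List.ne_nil_of_length_pos (hLlen ▸ hk)
  have formula := divDiff_circleIntegral G s hs0 hDC L.length L rfl hne hmemball hdist
  -- continuity of the boundary values
  have hGcirc : Continuous fun θ : ℝ => G (circleMap 0 s θ) := by
    apply hGc4.comp_continuous (continuous_circleMap 0 s)
    intro θ
    have := circleMap_mem_sphere (0:ℂ) hs0.le θ
    rw [mem_sphere_zero_iff_norm] at this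
    rw [mem_ball_zero_iff, this]; exact hs2
  set h : ℝ → ℝ := fun θ => s * ((s - 3*r)^k)⁻¹ * ‖G (circleMap 0 s θ)‖ with hh
  have hcont : Continuous h := by
    apply continuous_const.mul
    exact continuous_norm.comp hGcirc
  have hnonneg : ∀ θ, 0 ≤ h θ := by
    intro θ
    have h1 : (0:ℝ) ≤ ((s - 3*r)^k)⁻¹ := inv_nonneg.mpr (pow_nonneg (by linarith) _)
    exact mul_nonneg (mul_nonneg hs0.le h1) (norm_nonneg _)
  -- step 1: |divDiff| ≤ (2π)⁻¹ ∫ θ in 0..2π, h θ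
  have step1 : ‖divDiff G L‖ ≤ (2*π)⁻¹ * ∫ θ in (0:ℝ)..(2*π), h θ := by
    rw [formula]
    rw [show ‖(2 * Real.pi * Complex.I : ℂ)⁻¹ • ∮ z in C(0, s),
        ((L.map (fun w => z - w)).prod)⁻¹ • G z‖
      = (2*π)⁻¹ * ‖∮ z in C(0, s), ((L.map (fun w => z - w)).prod)⁻¹ • G z‖ from by
        rw [show ((2 * Real.pi * Complex.I : ℂ)⁻¹ • ∮ z in C(0, s),
            ((L.map (fun w => z - w)).prod)⁻¹ • G z) = ((2 * Real.pi * Complex.I : ℂ)⁻¹ *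
            ∮ z in C(0, s), ((L.map (fun w => z - w)).prod)⁻¹ • G z) from rfl]
        rw [norm_mul, norm_inv]
        congr 1
        simp [abs_of_pos hπ]]
    gcongr
    unfold circleIntegral
    calc ‖∫ θ in (0:ℝ)..(2*π), deriv (circleMap 0 s) θ •
          ((L.map (fun w => circleMap 0 s θ - w)).prod)⁻¹ • G (circleMap 0 s θ)‖
        ≤ |∫ θ in (0:ℝ)..(2*π), h θ| := by
          apply intervalIntegral.norm_integral_le_abs_of_norm_le
          · filter_upwards with θ
            rw [deriv_circleMap]
            rw [norm_smul, norm_smul]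
            have hzs : ‖circleMap 0 s θ‖ = s := by
              simpa [abs_of_pos hs0] using norm_circleMap_zero s θ
            have e1 : ‖circleMap 0 s θ * Complex.I‖ = s := by
              simp [hzs]
            rw [e1, hh]
            have hlb : (s - 3*r)^k ≤ ‖(L.map
                (fun w => circleMap 0 s θ - w)).prod‖ := by
              rw [← hLlen]
              apply listProdLB (by linarith) _ L
              intro x hx
              have h1 : ‖x‖ ≤ 3*r := hmem3 x hx
              have h2 := norm_sub_norm_le (circleMap 0 s θ) x
              rw [hzs] at h2
              linarith
            have hpos : (0:ℝ) < (s - 3*r)^k := pow_pos (by linarith) k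
            show s * (‖((L.map (fun w => circleMap 0 s θ - w)).prod)⁻¹‖ *
                ‖G (circleMap 0 s θ)‖)
              ≤ s * ((s - 3*r)^k)⁻¹ * ‖G (circleMap 0 s θ)‖
            rw [norm_inv, ← mul_assoc]
            exact mul_le_mul_of_nonneg_right
              (mul_le_mul_of_nonneg_left (inv_anti₀ hpos hlb) hs0.le)
              (norm_nonneg _)
          · exact hcont.intervalIntegrable _ _
      _ = ∫ θ in (0:ℝ)..(2*π), h θ := by
          rw [abs_of_nonneg]
          apply intervalIntegral.integral_nonneg (by linarith)
          intro θ _; exact hnonneg θ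
  -- step 2: shift to (-π, π)
  have hper : Function.Periodic h (2*π) := by
    intro θ; simp only [hh, (periodic_circleMap 0 s) θ]
  have step2 : (∫ θ in (0:ℝ)..(2*π), h θ) = ∫ θ in Ioo (-π) π, h θ := by
    have := hper.intervalIntegral_add_eq 0 (-π)
    rw [zero_add] at this
    rw [show -π + 2*π = π from by ring] at this
    rw [this, intervalIntegral.integral_of_le (by linarith), integral_Ioc_eq_integral_Ioo]
  -- Jensen
  set ν : Measure ℝ := volume.restrict (Ioo (-π) π) with hν
  have hνuniv : ν univ = ENNReal.ofReal (2*π) := by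
    rw [hν, Measure.restrict_apply_univ, Real.volume_Ioo]
    congr 1; ring
  haveI : IsFiniteMeasure ν := ⟨by rw [hνuniv]; exact ENNReal.ofReal_lt_top⟩
  haveI : NeZero ν := ⟨by
    intro h0
    have := hνuniv
    rw [h0] at this
    simp only [Measure.coe_zero, Pi.zero_apply] at this
    rw [eq_comm, ENNReal.ofReal_eq_zero] at this
    linarith⟩
  have hInt : Integrable h ν := (hcont.integrableOn_Icc).mono_set Ioo_subset_Icc_self
  have hIntq : Integrable (fun θ => h θ ^ q) ν := by
    have : Continuous fun θ => h θ ^ q :=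
      hcont.rpow_const (fun θ => Or.inr (by linarith))
    exact (this.integrableOn_Icc).mono_set Ioo_subset_Icc_self
  have havg : ‖divDiff G L‖ ≤ ⨍ θ, h θ ∂ν := by
    rw [average_eq, measureReal_def, hνuniv, ENNReal.toReal_ofReal (by linarith), smul_eq_mul]
    calc ‖divDiff G L‖ ≤ (2*π)⁻¹ * ∫ θ in (0:ℝ)..(2*π), h θ := step1
      _ = (2*π)⁻¹ * ∫ θ, h θ ∂ν := by rw [step2]
  have hJensen : (⨍ θ, h θ ∂ν) ^ q ≤ ⨍ θ, h θ ^ q ∂ν := by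
    have hgc : ContinuousOn (fun x : ℝ => x ^ q) (Ici 0) := fun x _ =>
      (Real.continuousAt_rpow_const x q (Or.inr (by linarith))).continuousWithinAt
    exact (convexOn_rpow hq).map_average_le hgc isClosed_Ici
      (Filter.Eventually.of_forall fun θ => hnonneg θ) hInt hIntq
  have habsq : ‖divDiff G L‖ ^ q ≤ ⨍ θ, h θ ^ q ∂ν :=
    le_trans (Real.rpow_le_rpow (norm_nonneg _) havg (by linarith)) hJensen
  -- pointwise bound on h^q and conclude
  have hpt : ∀ θ, h θ ^ q ≤ (4*r*((r/2)^k)⁻¹)^q * (2/(7*r)) *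
      (s * ‖G (circleMap 0 s θ)‖ ^ q) := by
    intro θ
    have hb : h θ ≤ (4*r*((r/2)^k)⁻¹) * ‖G (circleMap 0 s θ)‖ := by
      have h1 : ((s - 3*r)^k)⁻¹ ≤ ((r/2)^k)⁻¹ :=
        inv_anti₀ (pow_pos (by linarith) k)
          (pow_le_pow_left₀ (by linarith) (by linarith) k)
      have h2 : (0:ℝ) ≤ ((s - 3*r)^k)⁻¹ := inv_nonneg.mpr (pow_nonneg (by linarith) _)
      show s * ((s - 3*r)^k)⁻¹ * ‖G (circleMap 0 s θ)‖
          ≤ 4*r*((r/2)^k)⁻¹ * ‖G (circleMap 0 s θ)‖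
      exact mul_le_mul_of_nonneg_right
        (mul_le_mul hs2.le h1 h2 (by linarith)) (norm_nonneg _)
    have hc0 : (0:ℝ) ≤ 4*r*((r/2)^k)⁻¹ := by positivity
    calc h θ ^ q ≤ ((4*r*((r/2)^k)⁻¹) * ‖G (circleMap 0 s θ)‖) ^ q :=
          Real.rpow_le_rpow (hnonneg θ) hb (by linarith)
      _ = (4*r*((r/2)^k)⁻¹)^q * ‖G (circleMap 0 s θ)‖ ^ q :=
          Real.mul_rpow hc0 (norm_nonneg _)
      _ ≤ (4*r*((r/2)^k)⁻¹)^q * ((2/(7*r)) * (s * ‖G (circleMap 0 s θ)‖ ^ q)) := by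
          have h3 : (0:ℝ) ≤ (4*r*((r/2)^k)⁻¹)^q := Real.rpow_nonneg hc0 q
          have h4 : ‖G (circleMap 0 s θ)‖ ^ q
              ≤ (2/(7*r)) * (s * ‖G (circleMap 0 s θ)‖ ^ q) := by
            have h5 : (0:ℝ) ≤ ‖G (circleMap 0 s θ)‖ ^ q :=
              Real.rpow_nonneg (norm_nonneg _) q
            have h6 : (1:ℝ) ≤ 2/(7*r) * s := by
              rw [div_mul_eq_mul_div, le_div_iff₀ (by linarith)]
              linarith
            calc ‖G (circleMap 0 s θ)‖ ^ q
                = 1 * ‖G (circleMap 0 s θ)‖ ^ q := (one_mul _).symm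
              _ ≤ (2/(7*r) * s) * ‖G (circleMap 0 s θ)‖ ^ q :=
                  mul_le_mul_of_nonneg_right h6 h5
              _ = 2/(7*r) * (s * ‖G (circleMap 0 s θ)‖ ^ q) := by ring
          exact mul_le_mul_of_nonneg_left h4 h3
      _ = (4*r*((r/2)^k)⁻¹)^q * (2/(7*r)) * (s * ‖G (circleMap 0 s θ)‖ ^ q) := by
          ring
  have hIntRHS : Integrable (fun θ => (4*r*((r/2)^k)⁻¹)^q * (2/(7*r)) *
      (s * ‖G (circleMap 0 s θ)‖ ^ q)) ν := by
    have : Continuous fun θ => (4*r*((r/2)^k)⁻¹)^q * (2/(7*r)) *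
        (s * ‖G (circleMap 0 s θ)‖ ^ q) := by
      apply continuous_const.mul
      apply continuous_const.mul
      exact (continuous_norm.comp hGcirc).rpow_const
        (fun θ => Or.inr (by linarith))
    exact (this.integrableOn_Icc).mono_set Ioo_subset_Icc_self
  calc ‖divDiff G L‖ ^ q ≤ ⨍ θ, h θ ^ q ∂ν := habsq
    _ = (2*π)⁻¹ * ∫ θ, h θ ^ q ∂ν := by
        rw [average_eq, measureReal_def, hνuniv, ENNReal.toReal_ofReal (by linarith), smul_eq_mul]
    _ ≤ (2*π)⁻¹ * ∫ θ, (4*r*((r/2)^k)⁻¹)^q * (2/(7*r)) *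
          (s * ‖G (circleMap 0 s θ)‖ ^ q) ∂ν := by
        exact mul_le_mul_of_nonneg_left (integral_mono hIntq hIntRHS hpt) (by positivity)
    _ = (2*π)⁻¹ * ((4*r*((r/2)^k)⁻¹) ^ q * (2/(7*r))) *
          ∫ θ in Ioo (-π) π, s * ‖G (circleMap 0 s θ)‖ ^ q := by
        rw [MeasureTheory.integral_const_mul, ← mul_assoc, hν]
/-- L^q bound on divided differences of a bounded holomorphic function. -/
theorem stmt3 (k : ℕ) (hk : 0 < k) (q : ℝ) (hq : 1 ≤ q) :
    ∃ C > (0 : ℝ), ∀ r : ℝ, 0 < r → ∀ G : ℂ → ℂ,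
      DifferentiableOn ℂ G (Metric.ball (0 : ℂ) (4 * r)) →
      (∃ M, ∀ z ∈ Metric.ball (0 : ℂ) (4 * r), ‖G z‖ ≤ M) →
      ∀ lam : Fin k → ℂ, Function.Injective lam →
      (∀ i, ‖lam i‖ ≤ 3 * r) →
      ‖divDiff G (List.ofFn lam)‖ ^ q ≤
        C * r ^ ((1 - (k : ℝ)) * q - 2) *
          ∫ z in Metric.closedBall (0 : ℂ) (4 * r), ‖G z‖ ^ q := by
  have hπ := Real.pi_pos
  refine ⟨2/(7*π) * ((2:ℝ)^(k+2))^q, by positivity, ?_⟩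
  intro r hr G hGd hMex lam hinj hlam3
  obtain ⟨M, hM⟩ := hMex
  have h0mem : (0:ℂ) ∈ ball (0:ℂ) (4*r) := by
    rw [mem_ball_zero_iff]; simp; linarith
  have hM0 : 0 ≤ M := le_trans (norm_nonneg _) (hM 0 h0mem)
  set L := List.ofFn lam with hL
  have hLlen : L.length = k := by simp [hL]
  have hdist : L.Pairwise (· ≠ ·) := List.nodup_ofFn.mpr hinj
  have hmem3 : ∀ x ∈ L, ‖x‖ ≤ 3*r := by
    intro x hx
    rw [hL, List.mem_ofFn] at hx
    rcases hx with ⟨i, rfl⟩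
    exact hlam3 i
  set S := Ioo (7*r/2) (4*r) with hS
  set Θ := Ioo (-π) π with hΘ
  set F : ℝ × ℝ → ℝ := fun p => p.1 * ‖G (circleMap 0 p.1 p.2)‖ ^ q with hF
  set K : ℝ := (2*π)⁻¹ * ((4*r*((r/2)^k)⁻¹) ^ q * (2/(7*r))) with hK
  have hrk : (0:ℝ) < (r/2)^k := pow_pos (by linarith) k
  have hK0 : 0 ≤ K := by
    rw [hK]
    apply mul_nonneg (by positivity)
    apply mul_nonneg (Real.rpow_nonneg (by positivity) q) (by positivity)
  have hmeasS : MeasurableSet S := measurableSet_Ioo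
  have hmeasΘ : MeasurableSet Θ := measurableSet_Ioo
  -- continuity facts
  have hcirc : Continuous fun p : ℝ × ℝ => circleMap 0 p.1 p.2 := by
    simp only [circleMap]
    fun_prop
  have hmapsto : ∀ p ∈ S ×ˢ Θ, circleMap 0 p.1 p.2 ∈ ball (0:ℂ) (4*r) := by
    intro p hp
    rw [mem_ball_zero_iff, norm_circleMap_zero,
      abs_of_pos (lt_trans (by linarith) hp.1.1)]
    exact hp.1.2
  have hFcont : ContinuousOn F (S ×ˢ Θ) := by
    apply ContinuousOn.mul continuous_fst.continuousOn
    apply ContinuousOn.rpow_const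
    · exact continuous_norm.comp_continuousOn
        (hGd.continuousOn.comp hcirc.continuousOn hmapsto)
    · intro p _; right; linarith
  have hFbdd : ∀ p ∈ S ×ˢ Θ, ‖F p‖ ≤ 4*r * M ^ q := by
    intro p hp
    have h1 : (0:ℝ) < p.1 := lt_trans (by linarith) hp.1.1
    have h2 : ‖G (circleMap 0 p.1 p.2)‖ ≤ M := hM _ (hmapsto p hp)
    rw [hF, Real.norm_eq_abs,
      abs_of_nonneg (mul_nonneg h1.le (Real.rpow_nonneg (norm_nonneg _) q))]
    exact mul_le_mul hp.1.2.le
      (Real.rpow_le_rpow (norm_nonneg _) h2 (by linarith))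
      (Real.rpow_nonneg (norm_nonneg _) q) (by linarith)
  have hprodfin : (volume : Measure (ℝ×ℝ)) (S ×ˢ Θ) ≠ ⊤ := by
    rw [Measure.volume_eq_prod, Measure.prod_prod, hS, hΘ, Real.volume_Ioo, Real.volume_Ioo]
    exact ENNReal.mul_ne_top ENNReal.ofReal_ne_top ENNReal.ofReal_ne_top
  haveI hfinprod : IsFiniteMeasure ((volume : Measure (ℝ×ℝ)).restrict (S ×ˢ Θ)) :=
    ⟨by rw [Measure.restrict_apply_univ]; exact hprodfin.lt_top⟩
  have hFint : IntegrableOn F (S ×ˢ Θ) := by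
    refine Integrable.mono' (integrable_const (4*r*M^q))
      (hFcont.aestronglyMeasurable (hmeasS.prod hmeasΘ)) ?_
    exact (ae_restrict_iff' (hmeasS.prod hmeasΘ)).mpr
      (Filter.Eventually.of_forall hFbdd)
  have hFint' : Integrable F ((volume.restrict S).prod (volume.restrict Θ)) := by
    rw [Measure.prod_restrict]
    rwa [← Measure.volume_eq_prod]
  -- per-s bound
  have hper : ∀ s ∈ S, ‖divDiff G L‖ ^ q ≤ K * ∫ θ in Θ, F (s, θ) := by
    intro s hs
    exact perS k hk q hq r hr G hGd L hLlen hdist hmem3 s hs.1.le hs.2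
  -- integrate over S
  have hIntInner : IntegrableOn (fun s => ∫ θ in Θ, F (s, θ)) S := hFint'.integral_prod_left
  have hIntKInner : IntegrableOn (fun s => K * ∫ θ in Θ, F (s, θ)) S := hIntInner.const_mul K
  have hvolS : (volume S).toReal = r/2 := by
    rw [hS, Real.volume_Ioo, ENNReal.toReal_ofReal (by linarith)]
    ring
  have hSfin : volume S < ⊤ := by
    rw [hS, Real.volume_Ioo]; exact ENNReal.ofReal_lt_top
  have hSle : (r/2) * (‖divDiff G L‖ ^ q) ≤ K * ∫ s in S, ∫ θ in Θ, F (s, θ) := by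
    have h2 := setIntegral_mono_on
      (integrableOn_const hSfin.ne) hIntKInner hmeasS hper
    rw [setIntegral_const, smul_eq_mul, measureReal_def, hvolS, MeasureTheory.integral_const_mul] at h2
    exact h2
  have hiter : ∫ s in S, ∫ θ in Θ, F (s, θ) = ∫ p in S ×ˢ Θ, F p := by
    rw [Measure.volume_eq_prod, setIntegral_prod F]
    rwa [← Measure.volume_eq_prod]
  -- polar coordinates
  set A := {z : ℂ | ‖z‖ ∈ S} with hA
  have hAmeas : MeasurableSet A := continuous_norm.measurable hmeasS
  have hsymmeq : ∀ p : ℝ × ℝ, Complex.polarCoord.symm p = circleMap 0 p.1 p.2 := by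
    intro p
    rw [Complex.polarCoord_symm_apply]
    simp [circleMap, Complex.exp_mul_I, ← Complex.ofReal_cos, ← Complex.ofReal_sin]
  have hpolar : ∫ p in S ×ˢ Θ, F p = ∫ z in A, ‖G z‖ ^ q := by
    have h1 := Complex.integral_comp_polarCoord_symm
      (A.indicator (fun z => ‖G z‖ ^ q))
    rw [MeasureTheory.integral_indicator hAmeas] at h1
    rw [← h1]
    have hTmeas : MeasurableSet {p : ℝ × ℝ | p.1 ∈ S} := measurable_fst hmeasS
    have h2 : ∀ p ∈ polarCoord.target,
        p.1 • (A.indicator (fun z => ‖G z‖ ^ q)) (Complex.polarCoord.symm p)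
        = Set.indicator {p : ℝ × ℝ | p.1 ∈ S} F p := by
      intro p hp
      have hp1 : 0 < p.1 := hp.1
      have hmem : Complex.polarCoord.symm p ∈ A ↔ p.1 ∈ S := by
        rw [hA, mem_setOf_eq, Complex.norm_polarCoord_symm, abs_of_pos hp1]
      by_cases hps : p.1 ∈ S
      · rw [Set.indicator_of_mem (hmem.mpr hps),
          Set.indicator_of_mem (show p ∈ {p : ℝ × ℝ | p.1 ∈ S} from hps),
          hsymmeq, smul_eq_mul]
      · rw [Set.indicator_of_notMem (fun hc => hps (hmem.mp hc)),
          Set.indicator_of_notMem (show p ∉ {p : ℝ × ℝ | p.1 ∈ S} from hps), smul_zero]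
    rw [setIntegral_congr_fun polarCoord.open_target.measurableSet h2]
    rw [setIntegral_indicator hTmeas]
    have h3 : polarCoord.target ∩ {p : ℝ × ℝ | p.1 ∈ S} = S ×ˢ Θ := by
      ext p
      rw [polarCoord_target]
      constructor
      · rintro ⟨⟨_, h2'⟩, h3'⟩
        exact ⟨h3', h2'⟩
      · rintro ⟨h1', h2'⟩
        exact ⟨⟨lt_trans (by linarith) h1'.1, h2'⟩, h1'⟩
    rw [h3]
  -- A ⊆ closedBall, integrability on closedBall
  have hballint : IntegrableOn (fun z => ‖G z‖ ^ q) (ball (0:ℂ) (4*r)) := by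
    haveI : IsFiniteMeasure (volume.restrict (ball (0:ℂ) (4*r))) :=
      ⟨by rw [Measure.restrict_apply_univ]; exact measure_ball_lt_top⟩
    refine Integrable.mono' (integrable_const (M ^ q)) ?_ ?_
    · apply ContinuousOn.aestronglyMeasurable _ measurableSet_ball
      apply ContinuousOn.rpow_const (continuous_norm.comp_continuousOn hGd.continuousOn)
      intro z _; right; linarith
    · refine (ae_restrict_iff' measurableSet_ball).mpr (Filter.Eventually.of_forall ?_)
      intro z hz
      rw [Real.norm_eq_abs, abs_of_nonneg (Real.rpow_nonneg (norm_nonneg _) q)]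
      exact Real.rpow_le_rpow (norm_nonneg _) (hM z hz) (by linarith)
  have hballae : (ball (0:ℂ) (4*r) : Set ℂ) =ᵐ[volume] closedBall 0 (4*r) := by
    rw [MeasureTheory.ae_eq_set]
    constructor
    · rw [diff_eq_empty.mpr ball_subset_closedBall]; exact measure_empty
    · rw [closedBall_diff_ball]
      exact Measure.addHaar_sphere volume 0 (4*r)
  have hcbint : IntegrableOn (fun z => ‖G z‖ ^ q) (closedBall (0:ℂ) (4*r)) := by
    rw [IntegrableOn, ← Measure.restrict_congr_set hballae]
    exact hballint
  have hAle : ∫ z in A, ‖G z‖ ^ q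
      ≤ ∫ z in closedBall (0:ℂ) (4*r), ‖G z‖ ^ q := by
    apply setIntegral_mono_set hcbint
    · exact Filter.Eventually.of_forall fun z => Real.rpow_nonneg (norm_nonneg _) q
    · apply HasSubset.Subset.eventuallyLE
      intro z hz
      rw [mem_closedBall_zero_iff]
      exact le_of_lt (hA ▸ hz).2
  -- final algebra
  have hfinal : (r/2) * (‖divDiff G L‖ ^ q)
      ≤ K * ∫ z in closedBall (0:ℂ) (4*r), ‖G z‖ ^ q := by
    calc (r/2) * (‖divDiff G L‖ ^ q)
        ≤ K * ∫ s in S, ∫ θ in Θ, F (s, θ) := hSle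
      _ = K * ∫ z in A, ‖G z‖ ^ q := by rw [hiter, hpolar]
      _ ≤ K * ∫ z in closedBall (0:ℂ) (4*r), ‖G z‖ ^ q :=
          mul_le_mul_of_nonneg_left hAle hK0
  have hrk' : (r:ℝ)^k ≠ 0 := by positivity
  have hc0 : (4*r*((r/2)^k)⁻¹ : ℝ) = 2^(k+2) * r ^ ((1:ℝ) - k) := by
    rw [Real.rpow_sub hr, Real.rpow_one, Real.rpow_natCast, div_pow]
    field_simp
    ring
  have hKeq : (2/r) * K = (2/(7*π) * ((2:ℝ)^(k+2))^q) * r ^ ((1 - (k:ℝ)) * q - 2) := by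
    rw [hK, hc0, Real.mul_rpow (by positivity) (Real.rpow_nonneg hr.le _)]
    rw [← Real.rpow_natCast r k] at *
    rw [← Real.rpow_mul hr.le]
    rw [show (1 - (k:ℝ)) * q - 2 = ((1:ℝ) - k) * q + (-1) + (-1) from by ring]
    rw [Real.rpow_add hr, Real.rpow_add hr, Real.rpow_neg_one]
    field_simp
  have h2r : (0:ℝ) < 2/r := by positivity
  calc ‖divDiff G L‖ ^ q
      = (2/r) * ((r/2) * (‖divDiff G L‖ ^ q)) := by
        field_simp
    _ ≤ (2/r) * (K * ∫ z in closedBall (0:ℂ) (4*r), ‖G z‖ ^ q) :=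
        mul_le_mul_of_nonneg_left hfinal h2r.le
    _ = ((2/r) * K) * ∫ z in closedBall (0:ℂ) (4*r), ‖G z‖ ^ q := by ring
    _ = (2/(7*π) * ((2:ℝ)^(k+2))^q) * r ^ ((1 - (k:ℝ)) * q - 2) *
          ∫ z in closedBall (0:ℂ) (4*r), ‖G z‖ ^ q := by rw [hKeq]
end
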